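/- Let c > 0 and t₀ ∈ ℝ. Let y : ℝ → ℝ be twice differentiable on [t₀, ∞) satisfying y''(t) ≥ c² · y(t) > 0 for all t ≥ t₀, and y'(t₀) > 0. Then y(t) ≥ y(t₀) · cosh(c(t − t₀)) for every t ≥ t₀. -/

import Mathlib

open Set Real

/-- Corollary 3.6: if `y'' ≥ c² y > 0` on `[t₀, ∞)` and `y'(t₀) > 0`,
then `y(t) ≥ y(t₀) cosh(c(t - t₀))` for all `t ≥ t₀`. -/
theorem stmt2 (c t₀ : ℝ) (hc : 0 < c)
    (y y' y'' : ℝ → ℝ)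
    (hy1 : ∀ t ∈ Ici t₀, HasDerivWithinAt y (y' t) (Ici t₀) t)
    (hy2 : ∀ t ∈ Ici t₀, HasDerivWithinAt y' (y'' t) (Ici t₀) t)
    (hineq : ∀ t ∈ Ici t₀, c ^ 2 * y t ≤ y'' t)
    (hypos : ∀ t ∈ Ici t₀, 0 < y t)
    (hinit' : 0 < y' t₀) :
    ∀ t ∈ Ici t₀, y t₀ * Real.cosh (c * (t - t₀)) ≤ y t := by
  set k := y t₀ with hk
  -- basic derivative facts
  have hlin : ∀ t : ℝ, HasDerivAt (fun s => c * (s - t₀)) c t := by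
    intro t
    simpa using ((hasDerivAt_id t).sub_const t₀).const_mul c
  have hcosh : ∀ t : ℝ, HasDerivAt (fun s => Real.cosh (c * (s - t₀)))
      (Real.sinh (c * (t - t₀)) * c) t := fun t =>
    (Real.hasDerivAt_cosh (c * (t - t₀))).comp (h₂ := Real.cosh) t (hlin t)
  have hsinh : ∀ t : ℝ, HasDerivAt (fun s => Real.sinh (c * (s - t₀)))
      (Real.cosh (c * (t - t₀)) * c) t := fun t =>
    (Real.hasDerivAt_sinh (c * (t - t₀))).comp (h₂ := Real.sinh) t (hlin t)
  -- w = y - k cosh, w' = y' - k sinh c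
  set w : ℝ → ℝ := fun t => y t - k * Real.cosh (c * (t - t₀)) with hwdef
  set w' : ℝ → ℝ := fun t => y' t - k * (Real.sinh (c * (t - t₀)) * c) with hw'def
  set u : ℝ → ℝ := fun t => w' t + c * w t with hudef
  set u' : ℝ → ℝ := fun t =>
    (y'' t - k * (Real.cosh (c * (t - t₀)) * c * c)) + c * w' t with hu'def
  have hw : ∀ t ∈ Ici t₀, HasDerivWithinAt w (w' t) (Ici t₀) t := by
    intro t ht
    exact (hy1 t ht).sub (((hcosh t).const_mul k).hasDerivWithinAt)
  have hw' : ∀ t ∈ Ici t₀, HasDerivWithinAt w'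
      (y'' t - k * (Real.cosh (c * (t - t₀)) * c * c)) (Ici t₀) t := by
    intro t ht
    have : HasDerivAt (fun s => k * (Real.sinh (c * (s - t₀)) * c))
        (k * (Real.cosh (c * (t - t₀)) * c * c)) t := by
      simpa [mul_assoc] using ((hsinh t).mul_const c).const_mul k
    exact (hy2 t ht).sub this.hasDerivWithinAt
  have hu : ∀ t ∈ Ici t₀, HasDerivWithinAt u (u' t) (Ici t₀) t := by
    intro t ht
    exact (hw' t ht).add ((hw t ht).const_mul c)
  -- g = u * exp(-(c t)) is monotone on Ici t₀
  set g : ℝ → ℝ := fun t => u t * Real.exp (-(c * t)) with hgdef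
  have hg : ∀ t ∈ Ici t₀, HasDerivWithinAt g
      (u' t * Real.exp (-(c * t)) + u t * (Real.exp (-(c * t)) * (-c))) (Ici t₀) t := by
    intro t ht
    have he : HasDerivAt (fun s => Real.exp (-(c * s))) (Real.exp (-(c * t)) * (-c)) t := by
      have h1 : HasDerivAt (fun s => -(c * s)) (-c) t := by
        simpa [Pi.neg_def] using ((hasDerivAt_id t).const_mul c).neg
      exact (Real.hasDerivAt_exp (-(c * t))).comp t h1
    exact (hu t ht).mul he.hasDerivWithinAt
  have hgmono : MonotoneOn g (Ici t₀) := by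
    apply monotoneOn_of_hasDerivWithinAt_nonneg (convex_Ici t₀)
      (fun t ht => (hg t ht).continuousWithinAt)
      (f' := fun t => u' t * Real.exp (-(c * t)) + u t * (Real.exp (-(c * t)) * (-c)))
      (fun t ht => ((hg t (interior_subset ht)).mono interior_subset))
    intro t ht
    have ht' : t ∈ Ici t₀ := interior_subset ht
    have h1 := hineq t ht'
    have h2 : (0:ℝ) < Real.exp (-(c * t)) := Real.exp_pos _
    have key : u' t - c * u t = y'' t - c ^ 2 * y t := by
      simp only [hu'def, hudef, hw'def, hwdef]; ring
    nlinarith [mul_nonneg (sub_nonneg.mpr h1) h2.le]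
  -- hence u > 0 on Ici t₀
  have hupos : ∀ t ∈ Ici t₀, 0 < u t := by
    intro t ht
    have h0 : g t₀ ≤ g t := hgmono self_mem_Ici ht ht
    have hgt₀ : g t₀ = y' t₀ * Real.exp (-(c * t₀)) := by
      simp [hgdef, hudef, hw'def, hwdef, hk]
    have hpos : 0 < g t := by
      rw [hgt₀] at h0
      exact lt_of_lt_of_le (mul_pos hinit' (Real.exp_pos _)) h0
    have hpos' : 0 < u t * Real.exp (-(c * t)) := hpos
    rcases mul_pos_iff.mp hpos' with ⟨h, _⟩ | ⟨_, h⟩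
    · exact h
    · linarith [Real.exp_pos (-(c * t))]
  -- p = w * exp(c t) is monotone on Ici t₀
  set p : ℝ → ℝ := fun t => w t * Real.exp (c * t) with hpdef
  have hp : ∀ t ∈ Ici t₀, HasDerivWithinAt p
      (w' t * Real.exp (c * t) + w t * (Real.exp (c * t) * c)) (Ici t₀) t := by
    intro t ht
    have he : HasDerivAt (fun s => Real.exp (c * s)) (Real.exp (c * t) * c) t := by
      have h1 : HasDerivAt (fun s => c * s) c t := by
        simpa using (hasDerivAt_id t).const_mul c
      exact (Real.hasDerivAt_exp (c * t)).comp t h1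
    exact (hw t ht).mul he.hasDerivWithinAt
  have hpmono : MonotoneOn p (Ici t₀) := by
    apply monotoneOn_of_hasDerivWithinAt_nonneg (convex_Ici t₀)
      (fun t ht => (hp t ht).continuousWithinAt)
      (f' := fun t => w' t * Real.exp (c * t) + w t * (Real.exp (c * t) * c))
      (fun t ht => ((hp t (interior_subset ht)).mono interior_subset))
    intro t ht
    have ht' : t ∈ Ici t₀ := interior_subset ht
    have h1 := hupos t ht'
    have h2 : (0:ℝ) < Real.exp (c * t) := Real.exp_pos _
    have key : w' t * Real.exp (c * t) + w t * (Real.exp (c * t) * c)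
        = u t * Real.exp (c * t) := by
      simp only [hudef]; ring
    rw [key]
    positivity
  intro t ht
  have h0 : p t₀ ≤ p t := hpmono self_mem_Ici ht ht
  have hpt₀ : p t₀ = 0 := by simp [hpdef, hwdef, hk]
  rw [hpt₀] at h0
  have h2 : (0:ℝ) < Real.exp (c * t) := Real.exp_pos _
  have h0' : 0 ≤ w t * Real.exp (c * t) := h0
  have hw0 : 0 ≤ w t := by
    by_contra hneg
    push_neg at hneg
    nlinarith [mul_pos h2 (neg_pos.mpr hneg)]
  simpa [hwdef, sub_nonneg] using hw0
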